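/- arXiv:2509.20629 — 3 statements merged into one kernel-verified Lean document; each statement's English description precedes it below -/
import Mathlib

section
/- Let a, n be integers with n ≥ 1 and a² ≡ 1 (mod n). Set d₋ = gcd(a−1, n) and d₊ = gcd(a+1, n). Then d₋·d₊ = n or d₋·d₊ = 2n. -/
/-- At a tame stacky node where `μₙ` acts with exponent `a` satisfying `a² ≡ 1 (mod n)`,
setting `d₋ = gcd(a-1, n)` and `d₊ = gcd(a+1, n)`, one has `d₋ · d₊ = n` or `d₋ · d₊ = 2n`. -/
theorem stmt_0 (n a : ℤ) (hn : 1 ≤ n) (ha : n ∣ a ^ 2 - 1) :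
    (Int.gcd (a - 1) n : ℤ) * (Int.gcd (a + 1) n : ℤ) = n ∨
      (Int.gcd (a - 1) n : ℤ) * (Int.gcd (a + 1) n : ℤ) = 2 * n := by
  set N : ℕ := n.natAbs with hN
  have hNn : (N : ℤ) = n := Int.natAbs_of_nonneg (by omega)
  have hNpos : 0 < N := by
    have : (0:ℤ) < N := by rw [hNn]; omega
    exact_mod_cast this
  set A : ℕ := (a - 1).natAbs with hA
  set B : ℕ := (a + 1).natAbs with hB
  set d : ℕ := Int.gcd (a - 1) n with hd
  set e : ℕ := Int.gcd (a + 1) n with he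
  have hdA : d = Nat.gcd N A := by
    rw [hd, Int.gcd, Nat.gcd_comm]
  have heB : e = Nat.gcd N B := by
    rw [he, Int.gcd, Nat.gcd_comm]
  -- N divides d * e
  have hprod : n ∣ (a - 1) * (a + 1) := by
    have : (a - 1) * (a + 1) = a ^ 2 - 1 := by ring
    rw [this]; exact ha
  have hNAB : N ∣ A * B := by
    have := Int.natAbs_dvd_natAbs.mpr hprod
    rwa [Int.natAbs_mul] at this
  have h2 : N ∣ d * e := by
    rw [hdA, heB]
    exact Nat.dvd_gcd_mul_gcd_iff_dvd_mul.mpr hNAB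
  -- d * e divides 2 * N
  have hgcd2 : Nat.gcd d e ∣ 2 := by
    have h1 : (Nat.gcd d e : ℤ) ∣ a - 1 :=
      dvd_trans (Int.natCast_dvd_natCast.mpr (Nat.gcd_dvd_left d e)) (Int.gcd_dvd_left (a - 1) n)
    have h2' : (Nat.gcd d e : ℤ) ∣ a + 1 :=
      dvd_trans (Int.natCast_dvd_natCast.mpr (Nat.gcd_dvd_right d e)) (Int.gcd_dvd_left (a + 1) n)
    have : (Nat.gcd d e : ℤ) ∣ 2 := by
      have := dvd_sub h2' h1
      simpa using this
    exact_mod_cast this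
  have hlcm : Nat.lcm d e ∣ N := by
    refine Nat.lcm_dvd ?_ ?_
    · rw [hdA]; exact Nat.gcd_dvd_left _ _
    · rw [heB]; exact Nat.gcd_dvd_left _ _
  have h1 : d * e ∣ 2 * N := by
    rw [← Nat.gcd_mul_lcm d e]
    exact mul_dvd_mul hgcd2 hlcm
  -- combine
  obtain ⟨k, hk⟩ := h2
  have hk2 : k ∣ 2 := by
    have h1' : N * k ∣ N * 2 := by rw [← hk, Nat.mul_comm N 2]; exact h1
    exact (Nat.mul_dvd_mul_iff_left hNpos).mp h1'
  have hd0 : 0 < d := by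
    rcases Nat.eq_zero_or_pos d with h0 | h0
    · rw [hd, Int.gcd_eq_zero_iff] at h0; omega
    · exact h0
  have he0 : 0 < e := by
    rcases Nat.eq_zero_or_pos e with h0 | h0
    · rw [he, Int.gcd_eq_zero_iff] at h0; omega
    · exact h0
  have hkpos : 0 < k := by
    rcases Nat.eq_zero_or_pos k with h | h
    · have := Nat.mul_pos hd0 he0
      rw [hk, h, mul_zero] at this
      omega
    · exact h
  have hkle : k ≤ 2 := Nat.le_of_dvd (by norm_num) hk2
  interval_cases k
  · left
    rw [← hNn]
    exact_mod_cast (by omega : d * e = N)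
  · right
    rw [← hNn]
    exact_mod_cast (by omega : d * e = 2 * N)
end

section
/- Let n ≥ 1, a an integer with a² ≡ 1 mod n, and m an integer with m(a−1) ≡ 0 mod n. Let G be the group generated by t and σ with relations tⁿ = 1, σtσ⁻¹ = tᵃ, σ² = tᵐ. Then the abelianization of G has order 2·gcd(a−1, n). -/
/-- The relations `tⁿ = 1`, `σtσ⁻¹ = tᵃ`, `σ² = tᵐ` on two generators `t = 0`, `σ = 1`. -/
def nodeRels (n : ℕ) (a m : ℤ) : Set (FreeGroup (Fin 2)) :=
  {FreeGroup.of 0 ^ n,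
   FreeGroup.of 1 * FreeGroup.of 0 * (FreeGroup.of 1)⁻¹ * (FreeGroup.of 0 ^ a)⁻¹,
   FreeGroup.of 1 ^ 2 * (FreeGroup.of 0 ^ m)⁻¹}

namespace Stmt11Aux

variable (n : ℕ) (a m : ℤ)

def L : AddSubgroup (ℤ × ℤ) :=
  AddSubgroup.closure {((n : ℤ), 0), (1 - a, 0), (-m, 2)}

abbrev Q := (ℤ × ℤ) ⧸ L n a m

lemma mem1 : ((n : ℤ), (0:ℤ)) ∈ L n a m :=
  AddSubgroup.subset_closure (by simp)

lemma mem2 : ((1 - a : ℤ), (0:ℤ)) ∈ L n a m :=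
  AddSubgroup.subset_closure (by simp)

lemma mem3 : ((-m : ℤ), (2:ℤ)) ∈ L n a m :=
  AddSubgroup.subset_closure (by simp)

lemma memd (c : ℤ) : ((c * (Int.gcd (a-1) n : ℤ), (0:ℤ)) : ℤ × ℤ) ∈ L n a m := by
  have hb : (Int.gcd (a-1) n : ℤ) = (a-1) * Int.gcdA (a-1) n + n * Int.gcdB (a-1) n :=
    Int.gcd_eq_gcd_ab (a-1) n
  have h1 : ((a - 1 : ℤ), (0:ℤ)) ∈ L n a m := by
    have := (L n a m).neg_mem (mem2 n a m)
    simpa using this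
  have h2 := (L n a m).zsmul_mem h1 (c * Int.gcdA (a-1) n)
  have h3 := (L n a m).zsmul_mem (mem1 n a m) (c * Int.gcdB (a-1) n)
  have h4 := (L n a m).add_mem h2 h3
  have : (c * Int.gcdA (a-1) n) • ((a - 1 : ℤ), (0:ℤ))
      + (c * Int.gcdB (a-1) n) • (((n:ℤ), (0:ℤ)) : ℤ × ℤ)
      = ((c * (Int.gcd (a-1) n : ℤ), (0:ℤ)) : ℤ × ℤ) := by
    rw [hb]; simp [Prod.ext_iff, smul_eq_mul]; ring
  rwa [this] at h4

/-- the map `ℤ × ℤ → ZMod d × ZMod 2`. -/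
def f (p : ℤ × ℤ) : ZMod (Int.gcd (a-1) n) × ZMod 2 :=
  (((p.1 + m * (p.2 / 2) : ℤ) : ZMod (Int.gcd (a-1) n)), ((p.2 : ℤ) : ZMod 2))

lemma f_invariant (l : ℤ × ℤ) (hl : l ∈ L n a m) (v : ℤ × ℤ) :
    f n a m (v + l) = f n a m v := by
  have key : ∀ (k : ℕ) (X Y : ℤ), (k:ℤ) ∣ X - Y → ((X : ZMod k) = (Y : ZMod k)) := by
    intro k X Y h
    exact (ZMod.intCast_eq_intCast_iff _ _ _).2
      (Int.ModEq.symm (Int.modEq_iff_dvd.2 h))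
  set d : ℕ := Int.gcd (a-1) n with hd
  have hdn : (d : ℤ) ∣ (n : ℤ) := Int.gcd_dvd_right _ _
  have hda : (d : ℤ) ∣ (a - 1) := Int.gcd_dvd_left _ _
  induction hl using AddSubgroup.closure_induction generalizing v with
  | mem g hg =>
      rcases hg with h | h | h <;> subst h <;> obtain ⟨x, y⟩ := v <;>
        simp only [f, Prod.mk_add_mk, Prod.mk.injEq] <;> constructor
      · apply key d
        have : x + (n:ℤ) + m * ((y + 0) / 2) - (x + m * (y / 2)) = (n:ℤ) := by
          rw [add_zero]; ring
        rw [this]; exact hdn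
      · apply key 2; simp
      · apply key d
        have : x + (1 - a) + m * ((y + 0) / 2) - (x + m * (y / 2)) = -(a - 1) := by
          rw [add_zero]; ring
        rw [this]; exact dvd_neg.2 hda
      · apply key 2; simp
      · apply key d
        have hdiv : (y + 2) / 2 = y / 2 + 1 := by
          have := Int.add_mul_ediv_right y 1 (by norm_num : (2:ℤ) ≠ 0)
          simpa using this
        have : x + -m + m * ((y + 2) / 2) - (x + m * (y / 2)) = 0 := by
          rw [hdiv]; ring
        rw [this]; exact dvd_zero _
      · apply key 2
        have : y + 2 - y = 2 := by ring
        rw [this]; norm_num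
  | zero => simp
  | add x y hx hy ihx ihy =>
      rw [show v + (x + y) = (v + x) + y by ring, ihy, ihx]
  | neg x hx ihx =>
      have := ihx (v + -x)
      rw [show v + -x + x = v by ring] at this
      exact this.symm


def fbar : Q n a m → ZMod (Int.gcd (a-1) n) × ZMod 2 :=
  Quotient.lift (f n a m) (by
    intro v w hvw
    have h := (QuotientAddGroup.leftRel_apply).mp hvw
    have h2 := f_invariant n a m (-v + w) h v
    rw [show v + (-v + w) = w by ring] at h2
    exact h2.symm)

@[simp] lemma fbar_mk (v : ℤ × ℤ) :
    fbar n a m (QuotientAddGroup.mk v) = f n a m v := rfl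

def gmap : ZMod (Int.gcd (a-1) n) × ZMod 2 → Q n a m :=
  fun p => QuotientAddGroup.mk ((p.1.val : ℤ), (p.2.val : ℤ))

lemma right_inv (hn : 1 ≤ n) (p : ZMod (Int.gcd (a-1) n) × ZMod 2) :
    fbar n a m (gmap n a m p) = p := by
  obtain ⟨i, j⟩ := p
  set d : ℕ := Int.gcd (a-1) n with hd
  have hd0 : d ≠ 0 := by
    intro h
    have := Int.gcd_eq_zero_iff.mp (hd ▸ h)
    omega
  haveI : NeZero d := ⟨hd0⟩
  have hj2 : ((j.val : ℤ)) / 2 = 0 := by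
    apply Int.ediv_eq_zero_of_lt (by positivity)
    exact_mod_cast j.val_lt
  simp only [gmap, fbar_mk, f, hj2, mul_zero, add_zero, Prod.mk.injEq]
  constructor
  · push_cast
    simp [ZMod.natCast_val, ZMod.cast_id]
  · push_cast
    simp [ZMod.natCast_val, ZMod.cast_id]

lemma left_inv (hn : 1 ≤ n) (q : Q n a m) :
    gmap n a m (fbar n a m q) = q := by
  set d : ℕ := Int.gcd (a-1) n with hd
  have hd0 : d ≠ 0 := by
    intro h
    have := Int.gcd_eq_zero_iff.mp (hd ▸ h)
    omega
  haveI : NeZero d := ⟨hd0⟩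
  induction q using QuotientAddGroup.induction_on with
  | H v =>
    obtain ⟨x, y⟩ := v
    rw [fbar_mk]
    simp only [gmap, f]
    rw [QuotientAddGroup.eq]
    set X : ℤ := x + m * (y / 2) with hX
    have hx' : (((X : ZMod d)).val : ℤ) = X % d := ZMod.val_intCast X
    have hy' : (((y : ZMod 2)).val : ℤ) = y % 2 := ZMod.val_intCast y
    have hmem : (y/2) • ((-m : ℤ), (2:ℤ)) + ((X/d) * (d:ℤ), (0:ℤ)) ∈ L n a m :=
      (L n a m).add_mem ((L n a m).zsmul_mem (mem3 n a m) _) (memd n a m (X/(d:ℤ)))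
    have heq : (y/2) • ((-m : ℤ), (2:ℤ)) + ((X/(d:ℤ)) * (d:ℤ), (0:ℤ))
        = -(((((X : ZMod d)).val : ℤ), (((y : ZMod 2)).val : ℤ)) : ℤ × ℤ) + (x, y) := by
      have e1 : X % d + (d:ℤ) * (X / d) = X := Int.emod_add_mul_ediv X d
      have e2 : y % 2 + 2 * (y / 2) = y := Int.emod_add_mul_ediv y 2
      rw [Prod.ext_iff]
      constructor
      · simp only [Prod.smul_mk, Prod.mk_add_mk, smul_eq_mul, Prod.neg_mk, Prod.fst]
        rw [hx']
        linear_combination e1 + hX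
      · simp only [Prod.smul_mk, Prod.mk_add_mk, smul_eq_mul, Prod.neg_mk, Prod.snd]
        rw [hy']
        linear_combination e2
    rw [← heq]
    exact hmem

lemma cardQ (hn : 1 ≤ n) : Nat.card (Q n a m) = 2 * Int.gcd (a-1) n := by
  have e : Q n a m ≃ ZMod (Int.gcd (a-1) n) × ZMod 2 :=
    ⟨fbar n a m, gmap n a m, left_inv n a m hn, right_inv n a m hn⟩
  rw [Nat.card_congr e, Nat.card_prod, Nat.card_zmod, Nat.card_zmod, Nat.mul_comm]


/-- images of the two generators. -/
def f' : Fin 2 → Multiplicative (Q n a m) :=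
  ![Multiplicative.ofAdd (QuotientAddGroup.mk (1, 0)),
    Multiplicative.ofAdd (QuotientAddGroup.mk (0, 1))]

lemma lift_rels : ∀ r ∈ nodeRels n a m, FreeGroup.lift (f' n a m) r = 1 := by
  intro r hr
  simp only [nodeRels, Set.mem_insert_iff, Set.mem_singleton_iff] at hr
  rcases hr with rfl | rfl | rfl
  · rw [map_pow, FreeGroup.lift_apply_of]
    apply Multiplicative.toAdd.injective
    simp only [f', Matrix.cons_val_zero, toAdd_pow, toAdd_ofAdd, toAdd_one]
    rw [← QuotientAddGroup.mk_nsmul]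
    rw [show n • ((1:ℤ), (0:ℤ)) = (((n:ℤ), (0:ℤ)) : ℤ × ℤ) by simp]
    exact (QuotientAddGroup.eq_zero_iff _).mpr (mem1 n a m)
  · rw [map_mul, map_mul, map_inv, map_mul, map_inv, map_zpow, FreeGroup.lift_apply_of,
      FreeGroup.lift_apply_of]
    apply Multiplicative.toAdd.injective
    simp only [f', Matrix.cons_val_zero, Matrix.cons_val_one, Matrix.head_cons,
      toAdd_mul, toAdd_inv, toAdd_zpow, toAdd_ofAdd, toAdd_one]
    simp only [← QuotientAddGroup.mk_zsmul, ← QuotientAddGroup.mk_neg,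
      ← QuotientAddGroup.mk_add]
    rw [show ((0:ℤ),(1:ℤ)) + ((1:ℤ),(0:ℤ)) + -((0:ℤ),(1:ℤ)) + -(a • ((1:ℤ),(0:ℤ)))
        = ((1 - a : ℤ), (0:ℤ)) by simp [Prod.ext_iff]; ring]
    exact (QuotientAddGroup.eq_zero_iff _).mpr (mem2 n a m)
  · rw [map_mul, map_inv, map_pow, map_zpow, FreeGroup.lift_apply_of, FreeGroup.lift_apply_of]
    apply Multiplicative.toAdd.injective
    simp only [f', Matrix.cons_val_zero, Matrix.cons_val_one, Matrix.head_cons,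
      toAdd_mul, toAdd_inv, toAdd_zpow, toAdd_pow, toAdd_ofAdd, toAdd_one]
    rw [← QuotientAddGroup.mk_zsmul, ← QuotientAddGroup.mk_nsmul, ← QuotientAddGroup.mk_neg,
      ← QuotientAddGroup.mk_add]
    rw [show 2 • ((0:ℤ),(1:ℤ)) + -(m • ((1:ℤ),(0:ℤ))) = ((-m : ℤ), (2:ℤ)) by
      simp [Prod.ext_iff]]
    exact (QuotientAddGroup.eq_zero_iff _).mpr (mem3 n a m)

/-- the forward map. -/
def F : Abelianization (PresentedGroup (nodeRels n a m)) →* Multiplicative (Q n a m) :=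
  Abelianization.lift (PresentedGroup.toGroup (lift_rels n a m))

def u0 : Abelianization (PresentedGroup (nodeRels n a m)) :=
  Abelianization.of (PresentedGroup.of 0)

def v0 : Abelianization (PresentedGroup (nodeRels n a m)) :=
  Abelianization.of (PresentedGroup.of 1)

lemma rel_mk {r : FreeGroup (Fin 2)} (hr : r ∈ nodeRels n a m) :
    (QuotientGroup.mk r : PresentedGroup (nodeRels n a m)) = 1 :=
  (QuotientGroup.eq_one_iff _).mpr (Subgroup.subset_normalClosure hr)

lemma relT : (u0 n a m) ^ (n:ℤ) = 1 := by
  have h := rel_mk n a m (show FreeGroup.of 0 ^ n ∈ nodeRels n a m by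
    simp [nodeRels])
  rw [show (QuotientGroup.mk (FreeGroup.of (0 : Fin 2) ^ n) :
      PresentedGroup (nodeRels n a m)) = (PresentedGroup.of 0) ^ n from
    (QuotientGroup.mk' _).map_pow _ _] at h
  rw [zpow_natCast, u0, ← map_pow, h]; exact map_one _

lemma relTA : (u0 n a m) ^ (1 - a) = 1 := by
  have h := rel_mk n a m (show FreeGroup.of 1 * FreeGroup.of 0 * (FreeGroup.of 1)⁻¹
      * (FreeGroup.of 0 ^ a)⁻¹ ∈ nodeRels n a m by simp [nodeRels])
  rw [show (QuotientGroup.mk (FreeGroup.of (1 : Fin 2) * FreeGroup.of 0 * (FreeGroup.of 1)⁻¹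
      * (FreeGroup.of 0 ^ a)⁻¹) : PresentedGroup (nodeRels n a m))
      = PresentedGroup.of 1 * PresentedGroup.of 0 * (PresentedGroup.of 1)⁻¹
        * ((PresentedGroup.of 0) ^ a)⁻¹ from rfl] at h
  have h2 : v0 n a m * u0 n a m * (v0 n a m)⁻¹ * ((u0 n a m) ^ a)⁻¹ = 1 := by
    have := congrArg (fun x : PresentedGroup (nodeRels n a m) => Abelianization.of x) h
    rw [u0, v0, ← map_zpow, ← map_inv, ← map_inv, ← map_mul, ← map_mul, ← map_mul]
    exact this.trans (map_one _)
  have h3 : u0 n a m * ((u0 n a m) ^ a)⁻¹ = 1 := by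
    rw [← h2, mul_comm (v0 n a m) (u0 n a m)]
    group
  rw [zpow_sub, zpow_one]
  exact h3

lemma relS : (u0 n a m) ^ (-m) * (v0 n a m) ^ (2:ℤ) = 1 := by
  have h := rel_mk n a m (show FreeGroup.of 1 ^ 2 * (FreeGroup.of 0 ^ m)⁻¹
      ∈ nodeRels n a m by simp [nodeRels])
  rw [show (QuotientGroup.mk (FreeGroup.of (1 : Fin 2) ^ 2 * (FreeGroup.of 0 ^ m)⁻¹)
      : PresentedGroup (nodeRels n a m))
      = (PresentedGroup.of 1) ^ 2 * ((PresentedGroup.of 0) ^ m)⁻¹ from rfl] at h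
  have h2 : (v0 n a m) ^ 2 * ((u0 n a m) ^ m)⁻¹ = 1 := by
    have := congrArg (fun x : PresentedGroup (nodeRels n a m) => Abelianization.of x) h
    rw [u0, v0, ← map_zpow, ← map_pow, ← map_inv, ← map_mul]
    exact this.trans (map_one _)
  have h3 : (v0 n a m) ^ (2:ℤ) * ((u0 n a m) ^ m)⁻¹ = 1 := by
    rw [← h2]
    group
  rw [zpow_neg, mul_comm]
  exact h3

/-- the additive hom `ℤ × ℤ →+ Additive Ab`. -/
def phi : (ℤ × ℤ) →+ Additive (Abelianization (PresentedGroup (nodeRels n a m))) :=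
  ((zmultiplesHom _ (Additive.ofMul (u0 n a m))).comp (AddMonoidHom.fst ℤ ℤ)) +
  ((zmultiplesHom _ (Additive.ofMul (v0 n a m))).comp (AddMonoidHom.snd ℤ ℤ))

lemma phi_apply (x y : ℤ) : phi n a m (x, y)
    = Additive.ofMul ((u0 n a m) ^ x * (v0 n a m) ^ y) := by
  simp [phi, zmultiplesHom, ofMul_mul, ofMul_zpow]

lemma phi_ker : L n a m ≤ (phi n a m).ker := by
  rw [L, AddSubgroup.closure_le]
  intro g hg
  simp only [Set.mem_insert_iff, Set.mem_singleton_iff] at hg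
  rcases hg with rfl | rfl | rfl <;>
    simp only [SetLike.mem_coe, AddMonoidHom.mem_ker, phi_apply]
  · rw [zpow_zero, mul_one, relT]; rfl
  · rw [zpow_zero, mul_one, relTA]; rfl
  · rw [relS]; rfl

/-- the backward map. -/
def B : Multiplicative (Q n a m) →* Abelianization (PresentedGroup (nodeRels n a m)) :=
  AddMonoidHom.toMultiplicativeLeft (QuotientAddGroup.lift (L n a m) (phi n a m) (phi_ker n a m))

lemma B_mk (x y : ℤ) :
    B n a m (Multiplicative.ofAdd (QuotientAddGroup.mk (x, y)))
      = (u0 n a m) ^ x * (v0 n a m) ^ y := by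
  simp only [B, AddMonoidHom.coe_toMultiplicativeLeft, Function.comp_apply, toAdd_ofAdd]
  rw [QuotientAddGroup.lift_mk, phi_apply]
  rfl

lemma F_u0 : F n a m (u0 n a m) = Multiplicative.ofAdd (QuotientAddGroup.mk (1, 0)) := by
  rw [F, u0, Abelianization.lift_apply_of, PresentedGroup.toGroup.of]
  rfl

lemma F_v0 : F n a m (v0 n a m) = Multiplicative.ofAdd (QuotientAddGroup.mk (0, 1)) := by
  rw [F, v0, Abelianization.lift_apply_of, PresentedGroup.toGroup.of]
  rfl

lemma BF (g : Abelianization (PresentedGroup (nodeRels n a m))) :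
    B n a m (F n a m g) = g := by
  have : (B n a m).comp (F n a m) = MonoidHom.id _ := by
    apply Abelianization.hom_ext
    apply PresentedGroup.ext
    intro x
    fin_cases x <;>
      simp only [MonoidHom.comp_apply, MonoidHom.id_apply, Abelianization.of]
    · show B n a m (F n a m (u0 n a m)) = u0 n a m
      rw [F_u0, B_mk, zpow_one, zpow_zero, mul_one]
    · show B n a m (F n a m (v0 n a m)) = v0 n a m
      rw [F_v0, B_mk, zpow_one, zpow_zero, one_mul]
  exact DFunLike.congr_fun this g

lemma FB (q : Multiplicative (Q n a m)) : F n a m (B n a m q) = q := by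
  obtain ⟨p, rfl⟩ : ∃ p : ℤ × ℤ,
      Multiplicative.ofAdd (QuotientAddGroup.mk p : Q n a m) = q := by
    obtain ⟨p, hp⟩ := QuotientAddGroup.mk_surjective (Multiplicative.toAdd q)
    exact ⟨p, by rw [hp]; rfl⟩
  obtain ⟨x, y⟩ := p
  rw [B_mk, map_mul, map_zpow, map_zpow, F_u0, F_v0]
  apply Multiplicative.toAdd.injective
  simp only [toAdd_mul, toAdd_zpow, toAdd_ofAdd]
  rw [← QuotientAddGroup.mk_zsmul, ← QuotientAddGroup.mk_zsmul, ← QuotientAddGroup.mk_add]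
  congr 1
  simp [Prod.ext_iff]

lemma cardAb (hn : 1 ≤ n) :
    Nat.card (Abelianization (PresentedGroup (nodeRels n a m)))
      = 2 * Int.gcd (a - 1) n := by
  have e : Abelianization (PresentedGroup (nodeRels n a m)) ≃ Multiplicative (Q n a m) :=
    ⟨F n a m, B n a m, BF n a m, FB n a m⟩
  rw [Nat.card_congr e, Nat.card_congr Multiplicative.toAdd, cardQ n a m hn]

end Stmt11Aux

/-- Let `n ≥ 1`, `a² ≡ 1 (mod n)` and `m(a−1) ≡ 0 (mod n)`.  The abelianization of
`G = ⟨t, σ | tⁿ = 1, σtσ⁻¹ = tᵃ, σ² = tᵐ⟩` has order `2 · gcd(a−1, n)`. -/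
theorem stmt_11 (n : ℕ) (hn : 1 ≤ n) (a m : ℤ) (ha : (n : ℤ) ∣ a ^ 2 - 1)
    (hm : (n : ℤ) ∣ m * (a - 1)) :
    Nat.card (Abelianization (PresentedGroup (nodeRels n a m))) = 2 * Int.gcd (a - 1) n :=
  Stmt11Aux.cardAb n a m hn
end

section
/- Let n ≥ 1, a an integer with a² ≡ 1 mod n, and m an integer with m(a−1) ≡ 0 mod n. Let G be the group with presentation ⟨t, σ | tⁿ = 1, σtσ⁻¹ = tᵃ, σ² = tᵐ⟩. If both m and d₋ = gcd(a−1,n) are even, then Gᵃᵇ ≅ ℤ/2 ⊕ ℤ/d₋; otherwise Gᵃᵇ ≅ ℤ/(2d₋). -/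
namespace Stmt12Aux

variable (n : ℕ) (a m : ℤ)

/-- The abelianization. -/
abbrev Ab := Abelianization (PresentedGroup (nodeRels n a m))

/-- The projection from the free group. -/
def π : FreeGroup (Fin 2) →* Ab n a m :=
  (Abelianization.of).comp (PresentedGroup.mk (nodeRels n a m))

def tt : Ab n a m := π n a m (FreeGroup.of 0)
def ss : Ab n a m := π n a m (FreeGroup.of 1)

lemma π_rel {r : FreeGroup (Fin 2)} (hr : r ∈ nodeRels n a m) : π n a m r = 1 := by
  have : PresentedGroup.mk (nodeRels n a m) r = 1 :=
    (QuotientGroup.eq_one_iff r).2 (Subgroup.subset_normalClosure hr)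
  unfold π
  rw [MonoidHom.comp_apply, this, map_one]

lemma rel1 : tt n a m ^ n = 1 := by
  have := π_rel n a m (show FreeGroup.of 0 ^ n ∈ nodeRels n a m from Set.mem_insert _ _)
  rwa [map_pow] at this

lemma rel2 : ss n a m * tt n a m * (ss n a m)⁻¹ * (tt n a m ^ a)⁻¹ = 1 := by
  have := π_rel n a m (show FreeGroup.of 1 * FreeGroup.of 0 * (FreeGroup.of 1)⁻¹ *
      (FreeGroup.of 0 ^ a)⁻¹ ∈ nodeRels n a m from
    Set.mem_insert_iff.2 (Or.inr (Set.mem_insert _ _)))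
  rwa [map_mul, map_mul, map_mul, map_inv, map_inv, map_zpow] at this

lemma rel3 : ss n a m ^ 2 = tt n a m ^ m := by
  have := π_rel n a m (show FreeGroup.of 1 ^ 2 * (FreeGroup.of 0 ^ m)⁻¹ ∈ nodeRels n a m from
    Set.mem_insert_iff.2 (Or.inr (Set.mem_insert_iff.2 (Or.inr rfl))))
  rw [map_mul, map_pow, map_inv, map_zpow] at this
  exact mul_inv_eq_one.mp this

lemma rel_ta : tt n a m ^ (a - 1) = 1 := by
  have h2 := rel2 n a m
  have : tt n a m ^ a = tt n a m := by
    have := mul_inv_eq_one.mp h2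
    rw [mul_comm (ss n a m) (tt n a m), mul_assoc, mul_inv_cancel, mul_one] at this
    exact this.symm
  rw [zpow_sub, this, zpow_one, mul_inv_cancel]

lemma rel_td : tt n a m ^ ((Int.gcd (a - 1) n : ℤ)) = 1 := by
  rw [Int.gcd_eq_gcd_ab (a - 1) n]
  rw [zpow_add, zpow_mul, zpow_mul, rel_ta, one_zpow, one_mul, zpow_natCast,
    rel1, one_zpow]

/-- universal property: a morphism out of the abelianization. -/
lemma exists_phi {T : Type} [CommGroup T] (X Y : T) (hX : X ^ n = 1)
    (hXa : X ^ (a - 1) = 1) (hY : Y ^ 2 = X ^ m) :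
    ∃ φ : Ab n a m →* T, φ (tt n a m) = X ∧ φ (ss n a m) = Y := by
  have hXa' : X ^ a = X := by
    have : X ^ a = X ^ (a - 1) * X ^ (1 : ℤ) := by rw [← zpow_add]; ring_nf
    rw [this, hXa, one_mul, zpow_one]
  have h : ∀ r ∈ nodeRels n a m, FreeGroup.lift (![X, Y]) r = 1 := by
    intro r hr
    rcases hr with rfl | rfl | rfl
    · rw [map_pow, FreeGroup.lift_apply_of]
      simpa using hX
    · rw [map_mul, map_mul, map_mul, map_inv, map_inv, map_zpow, FreeGroup.lift_apply_of,
        FreeGroup.lift_apply_of]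
      simp only [Matrix.cons_val_one, Matrix.head_cons, Matrix.cons_val_zero]
      rw [hXa', mul_comm Y X]
      group
    · rw [map_mul, map_pow, map_inv, map_zpow, FreeGroup.lift_apply_of, FreeGroup.lift_apply_of]
      simp only [Matrix.cons_val_one, Matrix.head_cons, Matrix.cons_val_zero]
      rw [hY, mul_inv_cancel]
  refine ⟨Abelianization.lift (PresentedGroup.toGroup h), ?_, ?_⟩
  · show Abelianization.lift (PresentedGroup.toGroup h) (Abelianization.of (PresentedGroup.of 0)) = X
    rw [Abelianization.lift_apply_of, PresentedGroup.toGroup.of]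
    simp
  · show Abelianization.lift (PresentedGroup.toGroup h) (Abelianization.of (PresentedGroup.of 1)) = Y
    rw [Abelianization.lift_apply_of, PresentedGroup.toGroup.of]
    simp

/-- morphism from `ZMod k` into any group, sending `1` to an element of order dividing `k`. -/
lemma exists_psi {T : Type*} [Group T] (k : ℕ) (g : T) (hg : g ^ k = 1) :
    ∃ ψ : Multiplicative (ZMod k) →* T,
      ∀ j : ℤ, ψ (Multiplicative.ofAdd ((j : ZMod k))) = g ^ j := by
  have h0 : (zmultiplesHom (Additive T) (Additive.ofMul g)) (k : ℤ) = 0 := by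
    show ((k : ℤ)) • Additive.ofMul g = 0
    rw [← ofMul_zpow, zpow_natCast, hg, ofMul_one]
  refine ⟨AddMonoidHom.toMultiplicativeLeft (ZMod.lift k ⟨_, h0⟩), fun j => ?_⟩
  show Additive.toMul (ZMod.lift k ⟨_, h0⟩ ((j : ZMod k))) = g ^ j
  rw [ZMod.lift_coe]
  show Additive.toMul (j • Additive.ofMul g) = g ^ j
  rw [← ofMul_zpow]
  rfl


lemma tt_zpow_eq {z w : ℤ} (h : ((Int.gcd (a - 1) n : ℤ)) ∣ z - w) :
    tt n a m ^ z = tt n a m ^ w := by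
  obtain ⟨e, he⟩ := h
  have hz : z = w + (Int.gcd (a - 1) n : ℤ) * e := by linarith
  rw [hz, zpow_add, zpow_mul, rel_td, one_zpow, mul_one]

lemma zmod_cast_eq (k : ℕ) {x y : ℤ} (h : (k : ℤ) ∣ x - y) :
    ((x : ZMod k)) = ((y : ZMod k)) := by
  have h0 : ((x - y : ℤ) : ZMod k) = 0 := (ZMod.intCast_zmod_eq_zero_iff_dvd _ _).2 h
  push_cast at h0
  exact sub_eq_zero.mp h0

lemma zpow_ofAdd (k : ℕ) (x z : ℤ) :
    (Multiplicative.ofAdd ((x : ZMod k))) ^ z = Multiplicative.ofAdd (((z * x : ℤ) : ZMod k)) := by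
  rw [← ofAdd_zsmul]
  congr 1
  rw [zsmul_eq_mul]
  push_cast
  ring

lemma zpow_ofAdd2 (k l : ℕ) (x y z : ℤ) :
    (Multiplicative.ofAdd (((x : ZMod k), (y : ZMod l)))) ^ z =
      Multiplicative.ofAdd ((((z * x : ℤ) : ZMod k), ((z * y : ℤ) : ZMod l))) := by
  rw [← ofAdd_zsmul]
  congr 1
  rw [Prod.smul_mk]
  congr 1 <;> (rw [zsmul_eq_mul]; push_cast; ring)

lemma mul_ofAdd2 (k l : ℕ) (x y x' y' : ℤ) :
    Multiplicative.ofAdd (((x : ZMod k), (y : ZMod l))) *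
      Multiplicative.ofAdd (((x' : ZMod k), (y' : ZMod l))) =
      Multiplicative.ofAdd ((((x + x' : ℤ) : ZMod k), ((y + y' : ℤ) : ZMod l))) := by
  rw [← ofAdd_add]
  congr 1
  rw [Prod.mk_add_mk]
  push_cast
  rfl


lemma mul_ofAdd1 (k : ℕ) (x x' : ℤ) :
    Multiplicative.ofAdd ((x : ZMod k)) * Multiplicative.ofAdd ((x' : ZMod k)) =
      Multiplicative.ofAdd (((x + x' : ℤ) : ZMod k)) := by
  rw [← ofAdd_add]
  congr 1
  push_cast
  rfl

lemma ofAdd_eq (k : ℕ) {x y : ℤ} (h : (k : ℤ) ∣ x - y) :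
    Multiplicative.ofAdd ((x : ZMod k)) = Multiplicative.ofAdd ((y : ZMod k)) :=
  congrArg _ (zmod_cast_eq k h)

lemma ofAdd_eq_one' (k : ℕ) {x : ℤ} (h : (k : ℤ) ∣ x) :
    Multiplicative.ofAdd ((x : ZMod k)) = 1 := by
  have h2 := ofAdd_eq k (y := 0) (by simpa using h)
  simpa using h2

lemma ofAdd2_eq (k l : ℕ) {x y x' y' : ℤ} (h1 : (k : ℤ) ∣ x - x') (h2 : (l : ℤ) ∣ y - y') :
    Multiplicative.ofAdd (((x : ZMod k), (y : ZMod l))) =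
      Multiplicative.ofAdd (((x' : ZMod k), (y' : ZMod l))) :=
  congrArg _ (Prod.ext (zmod_cast_eq k h1) (zmod_cast_eq l h2))

lemma ofAdd2_eq_one (k l : ℕ) {x y : ℤ} (h1 : (k : ℤ) ∣ x) (h2 : (l : ℤ) ∣ y) :
    Multiplicative.ofAdd (((x : ZMod k), (y : ZMod l))) = 1 := by
  have h3 := ofAdd2_eq k l (x' := 0) (y' := 0) (by simpa using h1) (by simpa using h2)
  rw [h3]
  simp

lemma div_ofAdd2 (k l : ℕ) (x y x' y' : ℤ) :
    Multiplicative.ofAdd (((x : ZMod k), (y : ZMod l))) /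
      Multiplicative.ofAdd (((x' : ZMod k), (y' : ZMod l))) =
      Multiplicative.ofAdd ((((x - x' : ℤ) : ZMod k), ((y - y' : ℤ) : ZMod l))) := by
  rw [← ofAdd_sub]
  congr 1
  rw [Prod.mk_sub_mk]
  push_cast
  rfl

end Stmt12Aux


open Stmt12Aux in
theorem stmt_12' (n : ℕ) (hn : 1 ≤ n) (a m : ℤ) :
    (Even m ∧ Even (Int.gcd (a - 1) n) →
      Nonempty (Abelianization (PresentedGroup (nodeRels n a m)) ≃*
        Multiplicative (ZMod 2 × ZMod (Int.gcd (a - 1) n)))) ∧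
    (¬ (Even m ∧ Even (Int.gcd (a - 1) n)) →
      Nonempty (Abelianization (PresentedGroup (nodeRels n a m)) ≃*
        Multiplicative (ZMod (2 * Int.gcd (a - 1) n)))) := by
  have hDa : ((Int.gcd (a - 1) n : ℤ)) ∣ (a - 1) := Int.gcd_dvd_left _ _
  have hDn : ((Int.gcd (a - 1) n : ℤ)) ∣ (n : ℤ) := Int.gcd_dvd_right _ _
  set D : ℕ := Int.gcd (a - 1) n with hDdef
  constructor
  · -- Even case
    rintro ⟨hme, -⟩
    obtain ⟨c, hc⟩ := hme
    have hc2 : m = 2 * c := by linarith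
    have hX1 : (Multiplicative.ofAdd (((0:ℤ) : ZMod 2), ((1:ℤ) : ZMod D))) ^ n = 1 := by
      rw [← zpow_natCast, zpow_ofAdd2]
      exact ofAdd2_eq_one _ _ (by norm_num) (by simpa using hDn)
    have hX2 : (Multiplicative.ofAdd (((0:ℤ) : ZMod 2), ((1:ℤ) : ZMod D))) ^ (a - 1) = 1 := by
      rw [zpow_ofAdd2]
      exact ofAdd2_eq_one _ _ (by norm_num) (by simpa using hDa)
    have hY : (Multiplicative.ofAdd (((1:ℤ) : ZMod 2), ((c:ℤ) : ZMod D))) ^ 2 =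
        (Multiplicative.ofAdd (((0:ℤ) : ZMod 2), ((1:ℤ) : ZMod D))) ^ m := by
      rw [← zpow_natCast, zpow_ofAdd2, zpow_ofAdd2]
      exact ofAdd2_eq _ _ ⟨1, by push_cast; ring⟩ ⟨0, by push_cast; rw [hc2]; ring⟩
    obtain ⟨φ, hφt, hφs⟩ := exists_phi n a m _ _ hX1 hX2 hY
    set g1 : Ab n a m := ss n a m / tt n a m ^ (c : ℤ) with hg1def
    have hg1 : g1 ^ 2 = 1 := by
      rw [hg1def, div_pow, rel3, ← zpow_natCast (tt n a m ^ (c:ℤ)), ← zpow_mul]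
      rw [show (c : ℤ) * ((2:ℕ) : ℤ) = m by rw [hc2]; push_cast; ring]
      exact div_self' _
    have hg2 : tt n a m ^ D = 1 := by
      have := rel_td n a m
      rwa [zpow_natCast] at this
    obtain ⟨ψ₁, hψ₁⟩ := exists_psi 2 g1 hg1
    obtain ⟨ψ₂, hψ₂⟩ := exists_psi D (tt n a m) hg2
    set ψ : Multiplicative (ZMod 2 × ZMod D) →* Ab n a m :=
      (ψ₁.coprod ψ₂).comp (MulEquiv.prodMultiplicative (G := ZMod 2) (H := ZMod D)).toMonoidHom with hψdef
    have hψ : ∀ i j : ℤ, ψ (Multiplicative.ofAdd (((i:ℤ) : ZMod 2), ((j:ℤ) : ZMod D))) =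
        g1 ^ i * tt n a m ^ j := by
      intro i j
      show ψ₁ (Multiplicative.ofAdd ((i : ZMod 2))) * ψ₂ (Multiplicative.ofAdd ((j : ZMod D))) =
        g1 ^ i * tt n a m ^ j
      rw [hψ₁ i, hψ₂ j]
    have hcomp : ψ.comp φ = MonoidHom.id (Ab n a m) := by
      refine Abelianization.hom_ext _ _ (PresentedGroup.ext fun x => ?_)
      fin_cases x
      · show ψ (φ (tt n a m)) = tt n a m
        rw [hφt, hψ 0 1]
        simp
      · show ψ (φ (ss n a m)) = ss n a m
        rw [hφs, hψ 1 c]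
        rw [zpow_one, hg1def, div_mul_cancel]
    have hφg1 : φ g1 = Multiplicative.ofAdd (((1:ℤ) : ZMod 2), ((0:ℤ) : ZMod D)) := by
      rw [hg1def, map_div, map_zpow, hφt, hφs, zpow_ofAdd2, div_ofAdd2]
      exact ofAdd2_eq _ _ ⟨0, by ring⟩ ⟨0, by ring⟩
    have hcomp2 : ∀ z, φ (ψ z) = z := by
      intro z
      obtain ⟨i, hi⟩ := ZMod.intCast_surjective ((Multiplicative.toAdd z).1)
      obtain ⟨j, hj⟩ := ZMod.intCast_surjective ((Multiplicative.toAdd z).2)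
      have hz : z = Multiplicative.ofAdd (((i:ℤ) : ZMod 2), ((j:ℤ) : ZMod D)) := by
        rw [hi, hj]
        exact (ofAdd_toAdd z).symm
      rw [hz, hψ i j, map_mul, map_zpow, map_zpow, hφt, hφg1, zpow_ofAdd2, zpow_ofAdd2,
        mul_ofAdd2]
      exact ofAdd2_eq _ _ ⟨0, by ring⟩ ⟨0, by ring⟩
    exact ⟨{ toFun := φ, invFun := ψ, left_inv := fun x => DFunLike.congr_fun hcomp x,
             right_inv := hcomp2, map_mul' := map_mul φ }⟩
  · -- Odd case
    intro hodd
    set σ : ℤ := m + (D : ℤ) * (m + 1) with hσdef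
    have hσodd : Odd σ := by
      rcases Int.even_or_odd m with hme | hmo
      · have hDo : Odd (D : ℤ) := by
          rw [← Int.not_even_iff_odd, Int.even_coe_nat]
          exact fun hD => hodd ⟨hme, hD⟩
        exact hme.add_odd (hDo.mul (hme.add_one))
      · exact hmo.add_even ((hmo.add_one).mul_left _)
    obtain ⟨k', hk'⟩ := hσodd
    have hkey : 2 * k' = m + (D : ℤ) * (m + 1) - 1 := by
      have h5 := hk'.symm.trans hσdef
      linarith
    have hdd : ∀ x : ℤ, (D : ℤ) ∣ x → ((2 * D : ℕ) : ℤ) ∣ x * 2 := by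
      rintro x ⟨e, rfl⟩
      exact ⟨e, by push_cast; ring⟩
    have hX1 : (Multiplicative.ofAdd ((2:ℤ) : ZMod (2 * D))) ^ n = 1 := by
      rw [← zpow_natCast, zpow_ofAdd]
      exact ofAdd_eq_one' _ (by rw [show (n:ℤ) * 2 = (n:ℤ) * 2 from rfl]; exact hdd _ hDn)
    have hX2 : (Multiplicative.ofAdd ((2:ℤ) : ZMod (2 * D))) ^ (a - 1) = 1 := by
      rw [zpow_ofAdd]
      exact ofAdd_eq_one' _ (hdd _ hDa)
    have hY : (Multiplicative.ofAdd ((σ:ℤ) : ZMod (2 * D))) ^ 2 =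
        (Multiplicative.ofAdd ((2:ℤ) : ZMod (2 * D))) ^ m := by
      rw [← zpow_natCast, zpow_ofAdd, zpow_ofAdd]
      refine ofAdd_eq _ ⟨m + 1, ?_⟩
      push_cast
      rw [hσdef]
      ring
    obtain ⟨φ, hφt, hφs⟩ := exists_phi n a m _ _ hX1 hX2 hY
    set g : Ab n a m := tt n a m ^ (-k' : ℤ) * ss n a m with hgdef
    have hss2 : ss n a m ^ (2:ℤ) = tt n a m ^ m := by
      rw [show (2:ℤ) = ((2:ℕ) : ℤ) by norm_num, zpow_natCast, rel3]
    have hg : g ^ (2 * D) = 1 := by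
      have hss : ss n a m ^ (2 * D) = tt n a m ^ ((m * D : ℤ)) := by
        rw [pow_mul, rel3, ← zpow_natCast (tt n a m ^ m), ← zpow_mul]
      rw [hgdef, mul_pow, hss, ← zpow_natCast (tt n a m ^ (-k' : ℤ)), ← zpow_mul, ← zpow_add]
      rw [tt_zpow_eq n a m (w := 0) ⟨m - 2 * k', by push_cast; ring⟩, zpow_zero]
    obtain ⟨ψ, hψ⟩ := exists_psi (2 * D) g hg
    have hg2 : g ^ (2:ℤ) = tt n a m := by
      rw [hgdef, mul_zpow, ← zpow_mul, hss2, ← zpow_add]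
      rw [tt_zpow_eq n a m (w := 1) ⟨-(m + 1), by push_cast; linarith [hkey]⟩, zpow_one]
    have hgσ : g ^ (σ:ℤ) = ss n a m := by
      rw [hgdef, mul_zpow, ← zpow_mul]
      have hssσ : ss n a m ^ (σ:ℤ) = tt n a m ^ (m * k') * ss n a m := by
        rw [hk', zpow_add, zpow_one, show (2:ℤ) * k' = 2 * k' from rfl, zpow_mul, hss2,
          ← zpow_mul]
      rw [hssσ, ← mul_assoc, ← zpow_add]
      rw [tt_zpow_eq n a m (w := 0) ⟨-(k' * (m + 1)), by push_cast; linear_combination (-k') * hσdef⟩, zpow_zero,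
        one_mul]
    have hcomp : ψ.comp φ = MonoidHom.id (Ab n a m) := by
      refine Abelianization.hom_ext _ _ (PresentedGroup.ext fun x => ?_)
      fin_cases x
      · show ψ (φ (tt n a m)) = tt n a m
        rw [hφt, hψ 2, hg2]
      · show ψ (φ (ss n a m)) = ss n a m
        rw [hφs, hψ σ, hgσ]
    have hφg : φ g = Multiplicative.ofAdd ((1:ℤ) : ZMod (2 * D)) := by
      rw [hgdef, map_mul, map_zpow, hφt, hφs, zpow_ofAdd, mul_ofAdd1]
      exact ofAdd_eq _ ⟨0, by push_cast; linarith [hkey]⟩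
    have hcomp2 : ∀ z, φ (ψ z) = z := by
      intro z
      obtain ⟨j, hj⟩ := ZMod.intCast_surjective (Multiplicative.toAdd z)
      have hz : z = Multiplicative.ofAdd ((j:ℤ) : ZMod (2 * D)) := by
        rw [hj]
        exact (ofAdd_toAdd z).symm
      rw [hz, hψ j, map_zpow, hφg, zpow_ofAdd]
      exact ofAdd_eq _ ⟨0, by ring⟩
    exact ⟨{ toFun := φ, invFun := ψ, left_inv := fun x => DFunLike.congr_fun hcomp x,
             right_inv := hcomp2, map_mul' := map_mul φ }⟩

/-- Let `n ≥ 1`, `a² ≡ 1 (mod n)` and `m(a−1) ≡ 0 (mod n)`, and let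
`G = ⟨t, σ | tⁿ = 1, σtσ⁻¹ = tᵃ, σ² = tᵐ⟩`, `d₋ = gcd(a−1, n)`.  If both `m` and `d₋` are even
then `Gᵃᵇ ≅ ℤ/2 ⊕ ℤ/d₋`; otherwise `Gᵃᵇ ≅ ℤ/2d₋`. -/
theorem stmt_12 (n : ℕ) (hn : 1 ≤ n) (a m : ℤ) (ha : (n : ℤ) ∣ a ^ 2 - 1)
    (hm : (n : ℤ) ∣ m * (a - 1)) :
    (Even m ∧ Even (Int.gcd (a - 1) n) →
      Nonempty (Abelianization (PresentedGroup (nodeRels n a m)) ≃*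
        Multiplicative (ZMod 2 × ZMod (Int.gcd (a - 1) n)))) ∧
    (¬ (Even m ∧ Even (Int.gcd (a - 1) n)) →
      Nonempty (Abelianization (PresentedGroup (nodeRels n a m)) ≃*
        Multiplicative (ZMod (2 * Int.gcd (a - 1) n)))) :=
  stmt_12' n hn a m
end
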